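/- arXiv:2303.00201 — 2 statements merged into one kernel-verified Lean document; each statement's English description precedes it below -/
import Mathlib

section
/- Quantitative implicit function theorem: Let Y ⊆ ℝ^{n₁}, X ⊆ ℝ^{n₂} be open, f : Y × X → ℝ^{n₁} be C², (y₀,x₀) ∈ Y × X with D_y f(y₀,x₀) invertible. Set L_x = ‖D_x f(y₀,x₀)‖, M_y = ‖(D_y f(y₀,x₀))⁻¹‖, and for R₁, R₂ > 0 set K_yy = sup over y ∈ B(y₀,R₁) of ‖D²_y f(y,x₀)‖, K_xx = sup over (y,x) ∈ B((y₀,x₀),R₂) of ‖D²_x f(y,x)‖, K_xy = sup over (y,x) ∈ B((y₀,x₀),R₂) of ‖D_x D_y f(y,x)‖, and P = min{1/(2 M_y K_yy), R₁}. Then for all r ≤ min{P, R₂} and all ε ≤ min{√(R₂² - r²), 1/(4 M_y K_xy)} satisfying M_y (L_x + K_xy r + K_xx ε) ε < r/2, for every x ∈ B(x₀,ε) there exists a unique g(x) in the closed ball clB(y₀,r) with f(g(x), x) = f(y₀,x₀). -/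
open Metric Set

set_option maxHeartbeats 1000000

theorem stmt6 {n₁ n₂ : ℕ}
    (Y : Set (EuclideanSpace ℝ (Fin n₁))) (X : Set (EuclideanSpace ℝ (Fin n₂)))
    (hY : IsOpen Y) (hX : IsOpen X)
    (f : EuclideanSpace ℝ (Fin n₁) × EuclideanSpace ℝ (Fin n₂) → EuclideanSpace ℝ (Fin n₁))
    (hf : ContDiffOn ℝ 2 f (Y ×ˢ X))
    (y₀ : EuclideanSpace ℝ (Fin n₁)) (x₀ : EuclideanSpace ℝ (Fin n₂))
    (hy₀ : y₀ ∈ Y) (hx₀ : x₀ ∈ X)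
    (T : EuclideanSpace ℝ (Fin n₁) ≃L[ℝ] EuclideanSpace ℝ (Fin n₁))
    (hT : (T : EuclideanSpace ℝ (Fin n₁) →L[ℝ] EuclideanSpace ℝ (Fin n₁)) =
      fderiv ℝ (fun y => f (y, x₀)) y₀)
    (R₁ R₂ : ℝ) (hR₁ : 0 < R₁) (hR₂ : 0 < R₂)
    (hball₁ : ball y₀ R₁ ⊆ Y) (hball₂ : ball (y₀, x₀) R₂ ⊆ Y ×ˢ X)
    (Lx My Kyy Kxx Kxy P : ℝ)
    (hLx : Lx = ‖fderiv ℝ (fun x => f (y₀, x)) x₀‖)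
    (hMy : My = ‖(T.symm : EuclideanSpace ℝ (Fin n₁) →L[ℝ] EuclideanSpace ℝ (Fin n₁))‖)
    (hKyy : Kyy = sSup ((fun y =>
        ‖fderiv ℝ (fun y' => fderiv ℝ (fun y'' => f (y'', x₀)) y') y‖) '' ball y₀ R₁))
    (hKyyB : BddAbove ((fun y =>
        ‖fderiv ℝ (fun y' => fderiv ℝ (fun y'' => f (y'', x₀)) y') y‖) '' ball y₀ R₁))
    (hKxx : Kxx = sSup ((fun p : EuclideanSpace ℝ (Fin n₁) × EuclideanSpace ℝ (Fin n₂) =>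
        ‖fderiv ℝ (fun x' => fderiv ℝ (fun x'' => f (p.1, x'')) x') p.2‖) '' ball (y₀, x₀) R₂))
    (hKxxB : BddAbove ((fun p : EuclideanSpace ℝ (Fin n₁) × EuclideanSpace ℝ (Fin n₂) =>
        ‖fderiv ℝ (fun x' => fderiv ℝ (fun x'' => f (p.1, x'')) x') p.2‖) '' ball (y₀, x₀) R₂))
    (hKxy : Kxy = sSup ((fun p : EuclideanSpace ℝ (Fin n₁) × EuclideanSpace ℝ (Fin n₂) =>
        ‖fderiv ℝ (fun x' => fderiv ℝ (fun y' => f (y', x')) p.1) p.2‖) '' ball (y₀, x₀) R₂))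
    (hKxyB : BddAbove ((fun p : EuclideanSpace ℝ (Fin n₁) × EuclideanSpace ℝ (Fin n₂) =>
        ‖fderiv ℝ (fun x' => fderiv ℝ (fun y' => f (y', x')) p.1) p.2‖) '' ball (y₀, x₀) R₂))
    (hP : P = min (1 / (2 * My * Kyy)) R₁) :
    ∀ r : ℝ, r ≤ min P R₂ →
      ∀ ε : ℝ, ε ≤ min (Real.sqrt (R₂ ^ 2 - r ^ 2)) (1 / (4 * My * Kxy)) →
        My * (Lx + Kxy * r + Kxx * ε) * ε < r / 2 →
        ∀ x ∈ ball x₀ ε, ∃! y, y ∈ closedBall y₀ r ∧ f (y, x) = f (y₀, x₀) := by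
  intro r hr ε hε hlt x hx
  have hd : dist x x₀ < ε := mem_ball.mp hx
  set d : ℝ := dist x x₀ with hddef
  have hd0 : 0 ≤ d := dist_nonneg
  have hεpos : 0 < ε := lt_of_le_of_lt hd0 hd
  -- nonnegativity of the constants
  have hMy0 : 0 ≤ My := by rw [hMy]; exact norm_nonneg _
  have hLx0 : 0 ≤ Lx := by rw [hLx]; exact norm_nonneg _
  have hKyy0 : 0 ≤ Kyy := by
    rw [hKyy]
    exact le_trans (norm_nonneg (fderiv ℝ (fun y' => fderiv ℝ (fun y'' => f (y'', x₀)) y') y₀)) (le_csSup hKyyB ⟨y₀, mem_ball_self hR₁, rfl⟩)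
  have hKxx0 : 0 ≤ Kxx := by
    rw [hKxx]
    exact le_trans (norm_nonneg (fderiv ℝ (fun x' => fderiv ℝ (fun x'' => f (y₀, x'')) x') x₀)) (le_csSup hKxxB ⟨(y₀, x₀), mem_ball_self hR₂, rfl⟩)
  have hKxy0 : 0 ≤ Kxy := by
    rw [hKxy]
    exact le_trans (norm_nonneg (fderiv ℝ (fun x' => fderiv ℝ (fun y' => f (y', x')) y₀) x₀)) (le_csSup hKxyB ⟨(y₀, x₀), mem_ball_self hR₂, rfl⟩)
  have hε2 : ε ≤ 1 / (4 * My * Kxy) := le_trans hε (min_le_right _ _)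
  have hε1 : ε ≤ Real.sqrt (R₂ ^ 2 - r ^ 2) := le_trans hε (min_le_left _ _)
  have hMKpos : 0 < My * Kxy := by
    by_contra h
    push_neg at h
    have h4 : 4 * My * Kxy ≤ 0 := by nlinarith
    have := one_div_nonpos.mpr h4
    linarith
  have hMypos : 0 < My := by
    rcases mul_pos_iff.mp hMKpos with ⟨h1, _⟩ | ⟨h1, _⟩
    · exact h1
    · linarith
  have hKxypos : 0 < Kxy := by
    rcases mul_pos_iff.mp hMKpos with ⟨_, h1⟩ | ⟨h1, _⟩
    · exact h1
    · linarith
  have hMKe : My * Kxy * ε ≤ 1 / 4 := by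
    rw [le_div_iff₀ (by positivity : (0:ℝ) < 4 * My * Kxy)] at hε2
    linarith
  have hrpos : 0 < r := by
    by_contra h
    push_neg at h
    nlinarith [mul_nonneg (mul_nonneg hMy0 hLx0) hεpos.le,
      mul_nonneg (mul_nonneg hMy0 hKxx0) (mul_nonneg hεpos.le hεpos.le),
      mul_nonneg (sub_nonneg.mpr hMKe) (neg_nonneg.mpr h)]
  have hrP : r ≤ P := le_trans hr (min_le_left _ _)
  have hrR₂ : r ≤ R₂ := le_trans hr (min_le_right _ _)
  have hrR₁ : r ≤ R₁ := by rw [hP] at hrP; exact le_trans hrP (min_le_right _ _)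
  have hr1 : r ≤ 1 / (2 * My * Kyy) := by
    rw [hP] at hrP; exact le_trans hrP (min_le_left _ _)
  have hKyypos : 0 < Kyy := by
    rcases lt_or_eq_of_le hKyy0 with h | h
    · exact h
    · exfalso; rw [← h] at hr1; simp at hr1; linarith
  have hMKr : My * Kyy * r ≤ 1 / 2 := by
    rw [le_div_iff₀ (by positivity : (0:ℝ) < 2 * My * Kyy)] at hr1
    linarith
  have hrR₂' : r < R₂ := by
    have hs : 0 < Real.sqrt (R₂ ^ 2 - r ^ 2) := lt_of_lt_of_le hεpos hε1
    have h2 : 0 < R₂ ^ 2 - r ^ 2 := Real.sqrt_pos.mp hs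
    nlinarith
  have hεR₂ : ε ≤ R₂ := by
    calc ε ≤ Real.sqrt (R₂ ^ 2 - r ^ 2) := hε1
      _ ≤ Real.sqrt (R₂ ^ 2) := Real.sqrt_le_sqrt (by nlinarith)
      _ = R₂ := by
          rw [Real.sqrt_sq hR₂.le]
  -- membership facts
  have hmem : ∀ y' ∈ closedBall y₀ r, ∀ x' ∈ closedBall x₀ d,
      ((y', x') : EuclideanSpace ℝ (Fin n₁) × EuclideanSpace ℝ (Fin n₂))
        ∈ ball (y₀, x₀) R₂ := by
    intro y' hy' x' hx'
    rw [mem_ball, Prod.dist_eq]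
    exact max_lt (lt_of_le_of_lt (mem_closedBall.mp hy') hrR₂')
      (lt_of_le_of_lt (mem_closedBall.mp hx') (lt_of_lt_of_le hd hεR₂))
  have hopen : IsOpen (Y ×ˢ X) := hY.prod hX
  have hxd : x ∈ closedBall x₀ d := mem_closedBall.mpr le_rfl
  have hx₀d : x₀ ∈ closedBall x₀ d := mem_closedBall_self hd0
  have hy₀r : y₀ ∈ closedBall y₀ r := mem_closedBall_self hrpos.le
  have hsubY : ∀ y' ∈ closedBall y₀ r, y' ∈ Y := fun y' hy' =>
    (hball₂ (hmem y' hy' x₀ hx₀d)).1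
  have hsubX : ∀ x' ∈ closedBall x₀ d, x' ∈ X := fun x' hx' =>
    (hball₂ (hmem y₀ hy₀r x' hx')).2
  have hfd : DifferentiableOn ℝ f (Y ×ˢ X) := hf.differentiableOn (by norm_num)
  have hf' : ContDiffOn ℝ 1 (fderiv ℝ f) (Y ×ˢ X) := hf.fderiv_of_isOpen hopen (by norm_num)
  have hslice : ∀ x' ∈ X, ∀ y' ∈ Y, DifferentiableAt ℝ (fun y'' => f (y'', x')) y' := by
    intro x' hx' y' hy'
    have h1 : DifferentiableAt ℝ f (y', x') := hfd.differentiableAt (hopen.mem_nhds ⟨hy', hx'⟩)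
    exact h1.comp y' (differentiableAt_id.prodMk (differentiableAt_const x'))
  have hsliceX : ∀ y' ∈ Y, ∀ x' ∈ X, DifferentiableAt ℝ (fun x'' => f (y', x'')) x' := by
    intro y' hy' x' hx'
    have h1 : DifferentiableAt ℝ f (y', x') := hfd.differentiableAt (hopen.mem_nhds ⟨hy', hx'⟩)
    exact h1.comp x' ((differentiableAt_const y').prodMk differentiableAt_id)
  -- mixed second derivative: Lipschitz bound on the x-dependence of D_y f
  have hGlip : ∀ y' ∈ closedBall y₀ r, ∀ x₁ ∈ closedBall x₀ d, ∀ x₂ ∈ closedBall x₀ d,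
      ‖fderiv ℝ (fun y'' => f (y'', x₁)) y' - fderiv ℝ (fun y'' => f (y'', x₂)) y'‖
        ≤ Kxy * ‖x₁ - x₂‖ := by
    intro y' hy' x₁ hx₁ x₂ hx₂
    have hdiff : ∀ x' ∈ closedBall x₀ d,
        DifferentiableAt ℝ (fun x'' => fderiv ℝ (fun y'' => f (y'', x'')) y') x' := by
      intro x' hx'
      have hp : ((y', x') : EuclideanSpace ℝ (Fin n₁) × EuclideanSpace ℝ (Fin n₂)) ∈ Y ×ˢ X :=
        hball₂ (hmem y' hy' x' hx')
      have hev : (fun x'' => fderiv ℝ (fun y'' => f (y'', x'')) y') =ᶠ[nhds x']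
          (fun x'' => (fderiv ℝ f (y', x'')).comp
            (ContinuousLinearMap.inl ℝ (EuclideanSpace ℝ (Fin n₁)) (EuclideanSpace ℝ (Fin n₂)))) := by
        filter_upwards [hX.mem_nhds hp.2] with x'' hx''
        have hpx : ((y', x'') : EuclideanSpace ℝ (Fin n₁) × EuclideanSpace ℝ (Fin n₂))
            ∈ Y ×ˢ X := ⟨hp.1, hx''⟩
        have hfa : HasFDerivAt f (fderiv ℝ f (y', x'')) (y', x'') :=
          (hfd.differentiableAt (hopen.mem_nhds hpx)).hasFDerivAt
        exact (hfa.comp y' (hasFDerivAt_prodMk_left y' x'')).fderiv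
      rw [hev.differentiableAt_iff]
      have hdf : DifferentiableAt ℝ (fun x'' => fderiv ℝ f (y', x'')) x' :=
        ((hf'.differentiableOn one_ne_zero).differentiableAt (hopen.mem_nhds hp)).comp x'
          ((differentiableAt_const y').prodMk differentiableAt_id)
      exact hdf.clm_comp (differentiableAt_const _)
    have hbound : ∀ x' ∈ closedBall x₀ d,
        ‖fderiv ℝ (fun x'' => fderiv ℝ (fun y'' => f (y'', x'')) y') x'‖ ≤ Kxy := by
      intro x' hx'
      rw [hKxy]
      exact le_csSup hKxyB ⟨(y', x'), hmem y' hy' x' hx', rfl⟩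
    exact (convex_closedBall x₀ d).norm_image_sub_le_of_norm_fderiv_le hdiff hbound hx₂ hx₁
  -- second derivative in y : bound on the closed ball by a closure argument
  have hφ : ContDiffOn ℝ 2 (fun y₃ => f (y₃, x₀)) Y := by
    have hg : ContDiffOn ℝ 2
        (fun y₃ : EuclideanSpace ℝ (Fin n₁) =>
          ((y₃, x₀) : EuclideanSpace ℝ (Fin n₁) × EuclideanSpace ℝ (Fin n₂))) Y :=
      (contDiff_id.prodMk contDiff_const).contDiffOn
    exact hf.comp hg (fun y' hy' => ⟨hy', hx₀⟩)
  have hh1 : ContDiffOn ℝ 1 (fderiv ℝ (fun y₃ => f (y₃, x₀))) Y :=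
    hφ.fderiv_of_isOpen hY (by norm_num)
  have hHbd : ∀ y' ∈ closedBall y₀ r,
      ‖fderiv ℝ (fderiv ℝ (fun y₃ => f (y₃, x₀))) y'‖ ≤ Kyy := by
    intro y' hy'
    have hy'Y : y' ∈ Y := hsubY y' hy'
    have hcont : ContinuousOn (fderiv ℝ (fderiv ℝ (fun y₃ => f (y₃, x₀)))) Y :=
      hh1.continuousOn_fderiv_of_isOpen hY le_rfl
    have hcl : y' ∈ closure (ball y₀ r) := by
      rw [closure_ball y₀ hrpos.ne']; exact hy'
    haveI : (nhdsWithin y' (ball y₀ r)).NeBot := mem_closure_iff_nhdsWithin_neBot.mp hcl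
    have htd : Filter.Tendsto (fun z => ‖fderiv ℝ (fderiv ℝ (fun y₃ => f (y₃, x₀))) z‖)
        (nhdsWithin y' (ball y₀ r))
        (nhds ‖fderiv ℝ (fderiv ℝ (fun y₃ => f (y₃, x₀))) y'‖) :=
      by
        have h := ((hcont.continuousAt (hY.mem_nhds hy'Y)).continuousWithinAt (s := ball y₀ r)).tendsto
        exact (continuous_norm.tendsto (fderiv ℝ (fderiv ℝ (fun y₃ => f (y₃, x₀))) y')).comp h
    refine le_of_tendsto htd ?_
    refine eventually_nhdsWithin_of_forall (fun z hz => ?_)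
    rw [hKyy]
    exact le_csSup hKyyB ⟨z, ball_subset_ball hrR₁ hz, rfl⟩
  have hHlip : ∀ y' ∈ closedBall y₀ r,
      ‖fderiv ℝ (fun y₃ => f (y₃, x₀)) y' - fderiv ℝ (fun y₃ => f (y₃, x₀)) y₀‖
        ≤ Kyy * r := by
    intro y' hy'
    have h0 := (convex_closedBall y₀ r).norm_image_sub_le_of_norm_fderiv_le
      (fun z hz => ((hh1.differentiableOn one_ne_zero).differentiableAt
        (hY.mem_nhds (hsubY z hz))))
      hHbd hy₀r hy'
    have h5 : ‖y' - y₀‖ ≤ r := by rwa [mem_closedBall, dist_eq_norm] at hy'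
    calc ‖fderiv ℝ (fun y₃ => f (y₃, x₀)) y' - fderiv ℝ (fun y₃ => f (y₃, x₀)) y₀‖
        ≤ Kyy * ‖y' - y₀‖ := h0
      _ ≤ Kyy * r := mul_le_mul_of_nonneg_left h5 hKyy0
  -- deviation of D_y f from T
  have hT' : ∀ x' ∈ closedBall x₀ d, ∀ y' ∈ closedBall y₀ r,
      ‖fderiv ℝ (fun y'' => f (y'', x')) y'
        - (T : EuclideanSpace ℝ (Fin n₁) →L[ℝ] EuclideanSpace ℝ (Fin n₁))‖
        ≤ Kyy * r + Kxy * ‖x' - x₀‖ := by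
    intro x' hx' y' hy'
    have h1 := hGlip y' hy' x' hx' x₀ hx₀d
    have h2 := hHlip y' hy'
    rw [hT]
    have hsplit : fderiv ℝ (fun y'' => f (y'', x')) y' - fderiv ℝ (fun y => f (y, x₀)) y₀
        = (fderiv ℝ (fun y'' => f (y'', x')) y' - fderiv ℝ (fun y'' => f (y'', x₀)) y')
          + (fderiv ℝ (fun y'' => f (y'', x₀)) y' - fderiv ℝ (fun y => f (y, x₀)) y₀) := by
      abel
    rw [hsplit]
    refine le_trans (norm_add_le _ _) ?_
    linarith
  -- contraction-type estimate for fixed second coordinate in the closed d-ball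
  have hcontr : ∀ x' ∈ closedBall x₀ d, ∀ y₁ ∈ closedBall y₀ r, ∀ y₂ ∈ closedBall y₀ r,
      ‖f (y₁, x') - f (y₂, x')
          - (T : EuclideanSpace ℝ (Fin n₁) →L[ℝ] EuclideanSpace ℝ (Fin n₁)) (y₁ - y₂)‖
        ≤ (Kyy * r + Kxy * ‖x' - x₀‖) * ‖y₁ - y₂‖ := by
    intro x' hx' y₁ hy₁ y₂ hy₂
    have hx'X : x' ∈ X := hsubX x' hx'
    have hgdiff : ∀ z ∈ closedBall y₀ r, DifferentiableAt ℝ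
        (fun y'' => f (y'', x')
          - (T : EuclideanSpace ℝ (Fin n₁) →L[ℝ] EuclideanSpace ℝ (Fin n₁)) y'') z :=
      fun z hz => (hslice x' hx'X z (hsubY z hz)).sub
        ((T : EuclideanSpace ℝ (Fin n₁) →L[ℝ] EuclideanSpace ℝ (Fin n₁)).differentiableAt)
    have hgbd : ∀ z ∈ closedBall y₀ r, ‖fderiv ℝ
        (fun y'' => f (y'', x')
          - (T : EuclideanSpace ℝ (Fin n₁) →L[ℝ] EuclideanSpace ℝ (Fin n₁)) y'') z‖
        ≤ Kyy * r + Kxy * ‖x' - x₀‖ := by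
      intro z hz
      rw [fderiv_fun_sub (hslice x' hx'X z (hsubY z hz))
        ((T : EuclideanSpace ℝ (Fin n₁) →L[ℝ] EuclideanSpace ℝ (Fin n₁)).differentiableAt),
        ContinuousLinearMap.fderiv]
      exact hT' x' hx' z hz
    have h0 := (convex_closedBall y₀ r).norm_image_sub_le_of_norm_fderiv_le hgdiff hgbd hy₂ hy₁
    have hgg : (f (y₁, x')
          - (T : EuclideanSpace ℝ (Fin n₁) →L[ℝ] EuclideanSpace ℝ (Fin n₁)) y₁)
        - (f (y₂, x')
          - (T : EuclideanSpace ℝ (Fin n₁) →L[ℝ] EuclideanSpace ℝ (Fin n₁)) y₂)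
        = f (y₁, x') - f (y₂, x')
          - (T : EuclideanSpace ℝ (Fin n₁) →L[ℝ] EuclideanSpace ℝ (Fin n₁)) (y₁ - y₂) := by
      rw [map_sub]; abel
    rwa [hgg] at h0
  -- x-direction second derivative bound for the slice at y₀
  have hXlip : ∀ x₁ ∈ closedBall x₀ d, ∀ x₂ ∈ closedBall x₀ d,
      ‖fderiv ℝ (fun x'' => f (y₀, x'')) x₁ - fderiv ℝ (fun x'' => f (y₀, x'')) x₂‖
        ≤ Kxx * ‖x₁ - x₂‖ := by
    have hψ : ContDiffOn ℝ 2 (fun x'' => f (y₀, x'')) X := by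
      have hg : ContDiffOn ℝ 2
          (fun x'' : EuclideanSpace ℝ (Fin n₂) =>
            ((y₀, x'') : EuclideanSpace ℝ (Fin n₁) × EuclideanSpace ℝ (Fin n₂))) X :=
        (contDiff_const.prodMk contDiff_id).contDiffOn
      exact hf.comp hg (fun x' hx' => ⟨hy₀, hx'⟩)
    have hψ1 : ContDiffOn ℝ 1 (fderiv ℝ (fun x'' => f (y₀, x''))) X :=
      hψ.fderiv_of_isOpen hX (by norm_num)
    intro x₁ hx₁ x₂ hx₂
    refine (convex_closedBall x₀ d).norm_image_sub_le_of_norm_fderiv_le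
      (fun z hz => ((hψ1.differentiableOn one_ne_zero).differentiableAt
        (hX.mem_nhds (hsubX z hz))))
      (fun z hz => ?_) hx₂ hx₁
    rw [hKxx]
    exact le_csSup hKxxB ⟨(y₀, z), hmem y₀ hy₀r z hz, rfl⟩
  have hψbd : ∀ z ∈ closedBall x₀ d,
      ‖fderiv ℝ (fun x'' => f (y₀, x'')) z‖ ≤ Lx + Kxx * d := by
    intro z hz
    have h1 := hXlip z hz x₀ hx₀d
    have hzd : ‖z - x₀‖ ≤ d := by rwa [mem_closedBall, dist_eq_norm] at hz
    have h2 : ‖fderiv ℝ (fun x'' => f (y₀, x'')) z‖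
        ≤ ‖fderiv ℝ (fun x'' => f (y₀, x'')) z - fderiv ℝ (fun x'' => f (y₀, x'')) x₀‖
          + ‖fderiv ℝ (fun x'' => f (y₀, x'')) x₀‖ := by
      have h3 : fderiv ℝ (fun x'' => f (y₀, x'')) z
          = (fderiv ℝ (fun x'' => f (y₀, x'')) z - fderiv ℝ (fun x'' => f (y₀, x'')) x₀)
            + fderiv ℝ (fun x'' => f (y₀, x'')) x₀ := by abel
      calc ‖fderiv ℝ (fun x'' => f (y₀, x'')) z‖
          = ‖(fderiv ℝ (fun x'' => f (y₀, x'')) z - fderiv ℝ (fun x'' => f (y₀, x'')) x₀)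
            + fderiv ℝ (fun x'' => f (y₀, x'')) x₀‖ := by rw [← h3]
        _ ≤ _ := norm_add_le _ _
    rw [← hLx] at h2
    nlinarith [mul_le_mul_of_nonneg_left hzd hKxx0]
  have hψ0 : ‖f (y₀, x) - f (y₀, x₀)‖ ≤ (Lx + Kxx * d) * d := by
    have hψdiff : ∀ z ∈ closedBall x₀ d, DifferentiableAt ℝ (fun x'' => f (y₀, x'')) z :=
      fun z hz => hsliceX y₀ hy₀ z (hsubX z hz)
    have h0 := (convex_closedBall x₀ d).norm_image_sub_le_of_norm_fderiv_le hψdiff hψbd hx₀d hxd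
    have hxn : ‖x - x₀‖ = d := by rw [hddef, dist_eq_norm]
    calc ‖f (y₀, x) - f (y₀, x₀)‖ ≤ (Lx + Kxx * d) * ‖x - x₀‖ := h0
      _ = (Lx + Kxx * d) * d := by rw [hxn]
  -- bound on ‖f(y',x) - f(y',x₀)‖
  have hfyx : ∀ y' ∈ closedBall y₀ r,
      ‖f (y', x) - f (y', x₀)‖ ≤ (Lx + Kxx * d) * d + Kxy * d * r := by
    intro y' hy'
    have hdiffΔ : ∀ z ∈ closedBall y₀ r,
        DifferentiableAt ℝ (fun y'' => f (y'', x) - f (y'', x₀)) z :=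
      fun z hz => (hslice x (hsubX x hxd) z (hsubY z hz)).sub
        (hslice x₀ hx₀ z (hsubY z hz))
    have hbdΔ : ∀ z ∈ closedBall y₀ r,
        ‖fderiv ℝ (fun y'' => f (y'', x) - f (y'', x₀)) z‖ ≤ Kxy * d := by
      intro z hz
      rw [fderiv_fun_sub (hslice x (hsubX x hxd) z (hsubY z hz))
        (hslice x₀ hx₀ z (hsubY z hz))]
      have h1 := hGlip z hz x hxd x₀ hx₀d
      have hxn : ‖x - x₀‖ = d := by rw [hddef, dist_eq_norm]
      rwa [hxn] at h1
    have hΔ := (convex_closedBall y₀ r).norm_image_sub_le_of_norm_fderiv_le hdiffΔ hbdΔ hy₀r hy'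
    have h5 : ‖y' - y₀‖ ≤ r := by rwa [mem_closedBall, dist_eq_norm] at hy'
    have h4 : ‖f (y', x) - f (y', x₀)‖
        ≤ ‖(f (y', x) - f (y', x₀)) - (f (y₀, x) - f (y₀, x₀))‖
          + ‖f (y₀, x) - f (y₀, x₀)‖ := by
      have h3 : f (y', x) - f (y', x₀)
          = ((f (y', x) - f (y', x₀)) - (f (y₀, x) - f (y₀, x₀)))
            + (f (y₀, x) - f (y₀, x₀)) := by abel
      calc ‖f (y', x) - f (y', x₀)‖
          = ‖((f (y', x) - f (y', x₀)) - (f (y₀, x) - f (y₀, x₀)))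
            + (f (y₀, x) - f (y₀, x₀))‖ := by rw [← h3]
        _ ≤ _ := norm_add_le _ _
    have h6 : Kxy * d * ‖y' - y₀‖ ≤ Kxy * d * r :=
      mul_le_mul_of_nonneg_left h5 (by positivity)
    linarith
  -- the contraction map
  set S : EuclideanSpace ℝ (Fin n₁) →L[ℝ] EuclideanSpace ℝ (Fin n₁) :=
    (T.symm : EuclideanSpace ℝ (Fin n₁) →L[ℝ] EuclideanSpace ℝ (Fin n₁)) with hSdef
  set Φ : EuclideanSpace ℝ (Fin n₁) → EuclideanSpace ℝ (Fin n₁) :=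
    fun y' => y' - S (f (y', x) - f (y₀, x₀)) with hΦ
  have hSnorm : ∀ z, ‖S z‖ ≤ My * ‖z‖ := fun z => by rw [hMy]; exact S.le_opNorm z
  have hTS : ∀ z, S ((T : EuclideanSpace ℝ (Fin n₁) →L[ℝ] EuclideanSpace ℝ (Fin n₁)) z) = z :=
    fun z => T.symm_apply_apply z
  have hxn : ‖x - x₀‖ = d := by rw [hddef, dist_eq_norm]
  have hdε : d ≤ ε := hd.le
  have hΦlip : ∀ y₁ ∈ closedBall y₀ r, ∀ y₂ ∈ closedBall y₀ r,
      ‖Φ y₁ - Φ y₂‖ ≤ 3 / 4 * ‖y₁ - y₂‖ := by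
    intro y₁ hy₁ y₂ hy₂
    have h1 : Φ y₁ - Φ y₂
        = S ((T : EuclideanSpace ℝ (Fin n₁) →L[ℝ] EuclideanSpace ℝ (Fin n₁)) (y₁ - y₂)
          - (f (y₁, x) - f (y₂, x))) := by
      simp only [hΦ, map_sub, hTS]
      abel
    have h2 := hcontr x hxd y₁ hy₁ y₂ hy₂
    rw [hxn] at h2
    have hMKd : My * Kxy * d ≤ 1 / 4 := by nlinarith
    calc ‖Φ y₁ - Φ y₂‖
        = ‖S ((T : EuclideanSpace ℝ (Fin n₁) →L[ℝ] EuclideanSpace ℝ (Fin n₁)) (y₁ - y₂)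
          - (f (y₁, x) - f (y₂, x)))‖ := by rw [h1]
      _ ≤ My * ‖(T : EuclideanSpace ℝ (Fin n₁) →L[ℝ] EuclideanSpace ℝ (Fin n₁)) (y₁ - y₂)
          - (f (y₁, x) - f (y₂, x))‖ := hSnorm _
      _ = My * ‖f (y₁, x) - f (y₂, x)
          - (T : EuclideanSpace ℝ (Fin n₁) →L[ℝ] EuclideanSpace ℝ (Fin n₁)) (y₁ - y₂)‖ := by
          rw [norm_sub_rev]
      _ ≤ My * ((Kyy * r + Kxy * d) * ‖y₁ - y₂‖) := mul_le_mul_of_nonneg_left h2 hMy0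
      _ ≤ 3 / 4 * ‖y₁ - y₂‖ := by nlinarith [norm_nonneg (y₁ - y₂)]
  have hΦmaps : ∀ y' ∈ closedBall y₀ r, Φ y' ∈ closedBall y₀ r := by
    intro y' hy'
    have hsplit : Φ y' - y₀
        = S ((T : EuclideanSpace ℝ (Fin n₁) →L[ℝ] EuclideanSpace ℝ (Fin n₁)) (y' - y₀)
            - (f (y', x₀) - f (y₀, x₀)))
          - S (f (y', x) - f (y', x₀)) := by
      simp only [hΦ, map_sub, hTS]
      abel
    have h2 := hcontr x₀ hx₀d y' hy' y₀ hy₀r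
    simp only [sub_self, norm_zero, mul_zero, add_zero] at h2
    have h1 : ‖S ((T : EuclideanSpace ℝ (Fin n₁) →L[ℝ] EuclideanSpace ℝ (Fin n₁)) (y' - y₀)
        - (f (y', x₀) - f (y₀, x₀)))‖ ≤ My * (Kyy * r * ‖y' - y₀‖) := by
      calc ‖S ((T : EuclideanSpace ℝ (Fin n₁) →L[ℝ] EuclideanSpace ℝ (Fin n₁)) (y' - y₀)
          - (f (y', x₀) - f (y₀, x₀)))‖
          ≤ My * ‖(T : EuclideanSpace ℝ (Fin n₁) →L[ℝ] EuclideanSpace ℝ (Fin n₁)) (y' - y₀)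
            - (f (y', x₀) - f (y₀, x₀))‖ := hSnorm _
        _ = My * ‖f (y', x₀) - f (y₀, x₀)
            - (T : EuclideanSpace ℝ (Fin n₁) →L[ℝ] EuclideanSpace ℝ (Fin n₁)) (y' - y₀)‖ := by
            rw [norm_sub_rev]
        _ ≤ My * (Kyy * r * ‖y' - y₀‖) := mul_le_mul_of_nonneg_left h2 hMy0
    have h3 : ‖S (f (y', x) - f (y', x₀))‖ ≤ My * ((Lx + Kxx * d) * d + Kxy * d * r) :=
      le_trans (hSnorm _) (mul_le_mul_of_nonneg_left (hfyx y' hy') hMy0)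
    have h4 : ‖Φ y' - y₀‖
        ≤ My * (Kyy * r * ‖y' - y₀‖) + My * ((Lx + Kxx * d) * d + Kxy * d * r) := by
      rw [hsplit]
      exact le_trans (norm_sub_le _ _) (add_le_add h1 h3)
    rw [mem_closedBall, dist_eq_norm]
    have h5 : ‖y' - y₀‖ ≤ r := by rwa [mem_closedBall, dist_eq_norm] at hy'
    nlinarith [norm_nonneg (y' - y₀),
      mul_nonneg (mul_nonneg hMy0 hLx0) (sub_nonneg.mpr hdε),
      mul_nonneg (mul_nonneg (mul_nonneg hMy0 hKxx0) (by linarith : (0:ℝ) ≤ ε + d))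
        (sub_nonneg.mpr hdε),
      mul_nonneg (mul_nonneg (mul_nonneg hMy0 hKxy0) hrpos.le) (sub_nonneg.mpr hdε),
      mul_nonneg (sub_nonneg.mpr hMKr) (sub_nonneg.mpr h5),
      mul_nonneg (mul_nonneg (mul_nonneg hMy0 hKyy0) hrpos.le) (sub_nonneg.mpr h5)]
  -- Banach fixed point on the closed ball
  haveI : Nonempty (closedBall y₀ r) := ⟨⟨y₀, hy₀r⟩⟩
  haveI : CompleteSpace (closedBall y₀ r) := isClosed_closedBall.completeSpace_coe
  set φ : closedBall y₀ r → closedBall y₀ r := fun z => ⟨Φ z.1, hΦmaps z.1 z.2⟩ with hφdef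
  have hφcontr : ContractingWith (3/4 : NNReal) φ := by
    constructor
    · rw [← NNReal.coe_lt_coe]; norm_num
    · apply LipschitzWith.of_dist_le_mul
      intro a b
      have h0 := hΦlip a.1 a.2 b.1 b.2
      have hc : ((3/4 : NNReal) : ℝ) = 3 / 4 := by norm_num
      rw [Subtype.dist_eq, Subtype.dist_eq, dist_eq_norm, dist_eq_norm, hc]
      exact h0
  set z : closedBall y₀ r := ContractingWith.fixedPoint φ hφcontr with hzdef
  have hfix : φ z = z := hφcontr.fixedPoint_isFixedPt
  have hzmem : (z : EuclideanSpace ℝ (Fin n₁)) ∈ closedBall y₀ r := z.2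
  have hΦz : Φ (z : EuclideanSpace ℝ (Fin n₁)) = z := congrArg Subtype.val hfix
  have hsolz : f ((z : EuclideanSpace ℝ (Fin n₁)), x) = f (y₀, x₀) := by
    have h0 : S (f ((z : EuclideanSpace ℝ (Fin n₁)), x) - f (y₀, x₀)) = 0 := by
      have h1 := hΦz
      simp only [hΦ] at h1
      exact sub_eq_self.mp h1
    have h1 : f ((z : EuclideanSpace ℝ (Fin n₁)), x) - f (y₀, x₀) = 0 := by
      rw [hSdef] at h0
      have h2 := congrArg (fun w => T w) h0
      simpa using h2
    exact sub_eq_zero.mp h1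
  refine ⟨(z : EuclideanSpace ℝ (Fin n₁)), ⟨hzmem, hsolz⟩, ?_⟩
  intro y' hy'
  obtain ⟨hy'mem, hy'sol⟩ := hy'
  have hΦy' : Φ y' = y' := by
    simp only [hΦ, hy'sol, sub_self, map_zero, sub_zero]
  have hl := hΦlip y' hy'mem (z : EuclideanSpace ℝ (Fin n₁)) hzmem
  rw [hΦy', hΦz] at hl
  have h0 : ‖y' - (z : EuclideanSpace ℝ (Fin n₁))‖ ≤ 0 := by
    linarith only [hl]
  have h1 : y' - (z : EuclideanSpace ℝ (Fin n₁)) = 0 :=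
    norm_le_zero_iff.mp h0
  exact sub_eq_zero.mp h1
end

section
/- For four equal masses m₁ = m₂ = m₃ = m₄ placed at positions q₁ = (0, y), q₂ = (-1, 0), q₃ = (0, -y), q₄ = (1, 0) with y > 0, the Dziobek–Laura–Andoyer equations f_ij = Σ_{k ≠ i,j} m_k (R_ik - R_jk) Δ_ijk = 0 for all 1 ≤ i < j ≤ 4 hold if and only if y = 1, i.e., the configuration is a square. -/
open Finset

/-- Euclidean distance between two points of the plane (given as pairs of reals). -/
noncomputable def edist2 (p q : ℝ × ℝ) : ℝ :=
  Real.sqrt ((p.1 - q.1) ^ 2 + (p.2 - q.2) ^ 2)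

/-- Planar cross product. -/
def cross2 (u v : ℝ × ℝ) : ℝ := u.1 * v.2 - u.2 * v.1

/-- The Dziobek–Laura–Andoyer function `f_ij` for masses `m` and positions `q`. -/
noncomputable def dziobek (m : Fin 4 → ℝ) (q : Fin 4 → ℝ × ℝ) (i j : Fin 4) : ℝ :=
  ∑ k ∈ Finset.univ.filter (fun k => k ≠ i ∧ k ≠ j),
    m k * (1 / edist2 (q i) (q k) ^ 3 - 1 / edist2 (q j) (q k) ^ 3) *
      cross2 (q i - q k) (q j - q k)

theorem stmt19 (m : ℝ) (hm : 0 < m) (y : ℝ) (hy : 0 < y) :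
    (∀ i j : Fin 4, i < j →
        dziobek (fun _ => m) ![((0 : ℝ), y), (-1, 0), (0, -y), (1, 0)] i j = 0) ↔
      y = 1 := by
  constructor
  · intro hall
    have h := hall 0 1 (by decide)
    simp only [dziobek, cross2, Finset.sum_filter, Fin.sum_univ_four] at h
    norm_num [Prod.sub_def, edist2, show ((3:Fin 4) ≠ 0) from by decide,
      show ((3:Fin 4) ≠ 1) from by decide, show ((2:Fin 4) ≠ 0) from by decide,
      show ((2:Fin 4) ≠ 1) from by decide, Matrix.cons_val_two, Matrix.cons_val_three, Matrix.vecHead, Matrix.vecTail] at h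
    rw [show y + y = 2*y by ring, Real.sqrt_sq (by linarith),
      show (1:ℝ)/8 = ((2:ℝ)^3)⁻¹ by norm_num] at h
    have hs : (0:ℝ) < Real.sqrt (1 + y^2) := Real.sqrt_pos.2 (by positivity)
    have key : m * (((2*y)^3)⁻¹ - (Real.sqrt (1+y^2)^3)⁻¹) * (2*y)
        + m * ((Real.sqrt (1+y^2)^3)⁻¹ - ((2:ℝ)^3)⁻¹) * (y*2) = m*(1-y^3)/(4*y^2) := by
      field_simp
      ring
    rw [key] at h
    rcases div_eq_zero_iff.1 h with h | h
    · rcases mul_eq_zero.1 h with h | h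
      · exact absurd h hm.ne'
      · nlinarith
    · exact absurd h (by positivity)
  · rintro rfl
    have h4 : Real.sqrt 4 = 2 := by
      rw [show (4:ℝ) = 2^2 by norm_num, Real.sqrt_sq (by norm_num)]
    intro i j hij
    fin_cases i <;> fin_cases j <;>
      simp_all (config := {decide := true}) [dziobek, cross2, Finset.sum_filter,
        Fin.sum_univ_four, edist2, Prod.sub_def] <;> ring_nf <;> simp [h4] <;> ring
end
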